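/- Let A = {(a₁, b₁), (a₂, b₂), …, (a_m, b_m)} ⊆ ℕ₀² be a finite set of lattice points with non-negative coordinates. Let a be the smallest non-zero value among the a_i, let a' be the largest a_i, let b be the smallest non-zero value among the b_i, let b' be the largest b_i, and set N = max{2a'², 2b'²}. Suppose gcd(a, a') = 1, gcd(b, b') = 1, and {(0,0), (a,0), (0,b), (a',0), (0,b'), (a,b), (a,b'), (a',b), (a',b')} ⊆ A. Then for every integer k ≥ N, |kA − kA| ≥ |kA + kA|. In particular, A is not k-generational for every k: it is not the case that |kA + kA| > |kA − kA| for all k ∈ ℕ. -/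
import Mathlib


open Pointwise

/-- The `n`-fold iterated sumset: `iterSum 0 A = {0}`, `iterSum (n+1) A = A + iterSum n A`. -/
def iterSum {G : Type*} [AddCommGroup G] [DecidableEq G] : ℕ → Finset G → Finset G
  | 0, _ => {0}
  | n + 1, A => A + iterSum n A


lemma mem_iterSum_iff {G : Type*} [AddCommGroup G] [DecidableEq G] :
    ∀ (k : ℕ) (A : Finset G) (u : G),
    u ∈ iterSum k A ↔ ∃ s : Multiset G, Multiset.card s = k ∧ (∀ x ∈ s, x ∈ A) ∧ s.sum = u := by
  intro k
  induction k with
  | zero =>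
    intro A u
    simp only [iterSum, Finset.mem_singleton]
    constructor
    · rintro rfl; exact ⟨0, by simp⟩
    · rintro ⟨s, hs, -, rfl⟩
      rw [Multiset.card_eq_zero] at hs; simp [hs]
  | succ n ih =>
    intro A u
    show u ∈ A + iterSum n A ↔ _
    rw [Finset.mem_add]
    constructor
    · rintro ⟨p, hp, z, hz, rfl⟩
      obtain ⟨ms, hcard, hmem, hsum⟩ := (ih A z).mp hz
      refine ⟨p ::ₘ ms, by simp [hcard], ?_, by simp [hsum]⟩
      intro x hx
      rcases Multiset.mem_cons.mp hx with h | h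
      · exact h ▸ hp
      · exact hmem x h
    · rintro ⟨ms, hcard, hmem, rfl⟩
      have hne : ms ≠ 0 := by
        intro h; rw [h] at hcard; simp at hcard
      obtain ⟨p, hp⟩ := Multiset.exists_mem_of_ne_zero hne
      have herase : p ::ₘ ms.erase p = ms := Multiset.cons_erase hp
      refine ⟨p, hmem p hp, (ms.erase p).sum, ?_, ?_⟩
      · refine (ih A _).mpr ⟨ms.erase p, ?_, ?_, rfl⟩
        · have := congrArg Multiset.card herase
          simp only [Multiset.card_cons] at this
          omega
        · intro x hx; exact hmem x (Multiset.mem_of_mem_erase hx)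
      · rw [← herase]; simp

lemma fst_sum (s : Multiset (ℤ × ℤ)) : s.sum.1 = (s.map Prod.fst).sum := by
  induction s using Multiset.induction with
  | empty => simp
  | cons p t ih => simp [ih]

lemma snd_sum (s : Multiset (ℤ × ℤ)) : s.sum.2 = (s.map Prod.snd).sum := by
  induction s using Multiset.induction with
  | empty => simp
  | cons p t ih => simp [ih]

lemma card_le_sum_int (M : Multiset ℤ) (h : ∀ x ∈ M, 1 ≤ x) : (Multiset.card M : ℤ) ≤ M.sum := by
  induction M using Multiset.induction with
  | empty => simp
  | cons p t ih =>
    simp only [Multiset.card_cons, Multiset.sum_cons]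
    push_cast
    have h1 := h p (Multiset.mem_cons_self p t)
    have h2 := ih (fun x hx => h x (Multiset.mem_cons_of_mem hx))
    linarith

lemma sum_le_card_mul (M : Multiset ℤ) (c : ℤ) (h : ∀ x ∈ M, x ≤ c) :
    M.sum ≤ (Multiset.card M : ℤ) * c := by
  induction M using Multiset.induction with
  | empty => simp
  | cons p t ih =>
    simp only [Multiset.card_cons, Multiset.sum_cons]
    push_cast
    have h1 := h p (Multiset.mem_cons_self p t)
    have h2 := ih (fun x hx => h x (Multiset.mem_cons_of_mem hx))
    linarith

lemma card_mul_le_sum (M : Multiset ℤ) (c : ℤ) (h : ∀ x ∈ M, c ≤ x) :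
    (Multiset.card M : ℤ) * c ≤ M.sum := by
  induction M using Multiset.induction with
  | empty => simp
  | cons p t ih =>
    simp only [Multiset.card_cons, Multiset.sum_cons]
    push_cast
    have h1 := h p (Multiset.mem_cons_self p t)
    have h2 := ih (fun x hx => h x (Multiset.mem_cons_of_mem hx))
    linarith

-- residue lemma
lemma residue_exists (α α' τ : ℤ) (hα' : 0 < α') (hco : Int.gcd α α' = 1) :
    ∃ c : ℤ, 0 ≤ c ∧ c < α' ∧ α' ∣ (τ + c * α) := by
  have hcop : IsCoprime α α' := Int.isCoprime_iff_gcd_eq_one.mpr hco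
  obtain ⟨u, v, huv⟩ := hcop
  refine ⟨(-τ * u) % α', Int.emod_nonneg _ (ne_of_gt hα'), Int.emod_lt_of_pos _ hα', ?_⟩
  have h := Int.emod_add_mul_ediv (-τ * u) α'
  set q := (-τ * u) / α'
  have hc : (-τ * u) % α' = -τ * u - α' * q := by linarith
  rw [hc]
  refine ⟨τ * v - q * α, ?_⟩
  linear_combination (-τ) * huv
-- rep_diff: asymmetric-budget 1D difference representation
lemma rep_diff (α α' : ℤ) (hα : 0 < α) (hα' : 0 < α') (hco : Int.gcd α α' = 1)
    (M₁ M₂ : ℕ) (hM₁ : α' ≤ (M₁:ℤ)) (hM₂ : α' ≤ (M₂:ℤ)) (τ : ℤ)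
    (h₁ : -(((M₁:ℤ) - α) * α') ≤ τ) (h₂ : τ ≤ ((M₂:ℤ) - α) * α') :
    ∃ (w₁ w₂ r₁ r₂ : ℕ), w₁ + w₂ ≤ M₂ ∧ r₁ + r₂ ≤ M₁ ∧
      ((w₁:ℤ)*α + (w₂:ℤ)*α') - ((r₁:ℤ)*α + (r₂:ℤ)*α') = τ := by
  rcases le_or_gt 0 τ with hτ | hτ
  · obtain ⟨c, hc0, hclt, q, hq⟩ := residue_exists α α' τ hα' hco
    have hq0 : 0 ≤ q := by nlinarith
    have hqM : q ≤ (M₂:ℤ) := by nlinarith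
    refine ⟨0, q.toNat, c.toNat, 0, ?_, ?_, ?_⟩
    · have : (q.toNat : ℤ) ≤ (M₂:ℤ) := by rwa [Int.toNat_of_nonneg hq0]
      exact_mod_cast by simpa using this
    · have : (c.toNat : ℤ) ≤ (M₁:ℤ) := by rw [Int.toNat_of_nonneg hc0]; linarith
      exact_mod_cast by simpa using this
    · rw [Int.toNat_of_nonneg hq0, Int.toNat_of_nonneg hc0]
      push_cast; linarith
  · obtain ⟨c, hc0, hclt, q, hq⟩ := residue_exists α α' (-τ) hα' hco
    have hq0 : 0 ≤ q := by nlinarith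
    have hqM : q ≤ (M₁:ℤ) := by nlinarith
    refine ⟨c.toNat, 0, 0, q.toNat, ?_, ?_, ?_⟩
    · have : (c.toNat : ℤ) ≤ (M₂:ℤ) := by rw [Int.toNat_of_nonneg hc0]; linarith
      exact_mod_cast by simpa using this
    · have : (q.toNat : ℤ) ≤ (M₁:ℤ) := by rwa [Int.toNat_of_nonneg hq0]
      exact_mod_cast by simpa using this
    · rw [Int.toNat_of_nonneg hq0, Int.toNat_of_nonneg hc0]
      push_cast; linarith

lemma add_mem_iterSum {G : Type*} [AddCommGroup G] [DecidableEq G] {A : Finset G} {p u : G}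
    {n : ℕ} (hp : p ∈ A) (hu : u ∈ iterSum n A) : p + u ∈ iterSum (n+1) A := by
  show _ ∈ A + iterSum n A
  rw [Finset.mem_add]
  exact ⟨p, hp, u, hu, rfl⟩

lemma pick_step (α α' : ℤ) (x₁ x₂ n : ℕ) (h : x₁ + x₂ ≤ n + 1) :
    ∃ (c : ℤ) (z₁ z₂ : ℕ), z₁ + z₂ ≤ n ∧ (c = 0 ∨ c = α ∨ c = α') ∧
      (x₁:ℤ)*α + (x₂:ℤ)*α' = c + ((z₁:ℤ)*α + (z₂:ℤ)*α') := by
  rcases x₁ with _ | m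
  · rcases x₂ with _ | m
    · exact ⟨0, 0, 0, by omega, Or.inl rfl, by push_cast; ring⟩
    · exact ⟨α', 0, m, by omega, Or.inr (Or.inr rfl), by push_cast; ring⟩
  · exact ⟨α, m, x₂, by omega, Or.inr (Or.inl rfl), by push_cast; ring⟩

lemma grid_mem (A : Finset (ℤ × ℤ)) (a a' b b' : ℤ)
    (h1 : ((0:ℤ),(0:ℤ)) ∈ A) (h2 : ((a:ℤ),(0:ℤ)) ∈ A) (h3 : ((0:ℤ),(b:ℤ)) ∈ A)
    (h4 : ((a':ℤ),(0:ℤ)) ∈ A) (h5 : ((0:ℤ),(b':ℤ)) ∈ A) (h6 : ((a:ℤ),(b:ℤ)) ∈ A)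
    (h7 : ((a:ℤ),(b':ℤ)) ∈ A) (h8 : ((a':ℤ),(b:ℤ)) ∈ A) (h9 : ((a':ℤ),(b':ℤ)) ∈ A) :
    ∀ (k x₁ x₂ y₁ y₂ : ℕ), x₁ + x₂ ≤ k → y₁ + y₂ ≤ k →
      (((x₁:ℤ)*a + (x₂:ℤ)*a', (y₁:ℤ)*b + (y₂:ℤ)*b') : ℤ × ℤ) ∈ iterSum k A := by
  intro k
  induction k with
  | zero =>
    intro x₁ x₂ y₁ y₂ hx hy
    have : x₁ = 0 ∧ x₂ = 0 ∧ y₁ = 0 ∧ y₂ = 0 := by omega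
    obtain ⟨rfl, rfl, rfl, rfl⟩ := this
    simp [iterSum]
  | succ n ih =>
    intro x₁ x₂ y₁ y₂ hx hy
    obtain ⟨cx, z₁, z₂, hz, hcx, hxeq⟩ := pick_step a a' x₁ x₂ n hx
    obtain ⟨cy, u₁, u₂, hu, hcy, hyeq⟩ := pick_step b b' y₁ y₂ n hy
    have hpt : ((cx, cy) : ℤ × ℤ) ∈ A := by
      rcases hcx with rfl | rfl | rfl <;> rcases hcy with rfl | rfl | rfl <;> assumption
    have := add_mem_iterSum hpt (ih z₁ z₂ u₁ u₂ hz hu)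
    have heq : (((x₁:ℤ)*a + (x₂:ℤ)*a', (y₁:ℤ)*b + (y₂:ℤ)*b') : ℤ × ℤ)
        = (cx, cy) + (((z₁:ℤ)*a + (z₂:ℤ)*a', (u₁:ℤ)*b + (u₂:ℤ)*b') : ℤ × ℤ) := by
      rw [Prod.ext_iff]
      constructor <;> simp [hxeq, hyeq]
    rwa [heq]
lemma sum_eq_card_mul (M : Multiset ℤ) (c : ℤ) (h : ∀ x ∈ M, x = c) :
    M.sum = (Multiset.card M : ℤ) * c := by
  induction M using Multiset.induction with
  | empty => simp
  | cons p t ih =>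
    simp only [Multiset.sum_cons, Multiset.card_cons]
    rw [h p (Multiset.mem_cons_self p t), ih (fun x hx => h x (Multiset.mem_cons_of_mem hx))]
    push_cast; ring

lemma mem_iterSum_of_multiset {A : Finset (ℤ × ℤ)} {k : ℕ} (v : Multiset (ℤ × ℤ))
    (h1 : Multiset.card v = k) (h2 : ∀ p ∈ v, p ∈ A) : v.sum ∈ iterSum k A :=
  (mem_iterSum_iff k A v.sum).mpr ⟨v, h1, h2, rfl⟩

structure Ctx (A : Finset (ℤ × ℤ)) (a a' b b' : ℤ) : Prop where
  hnn : ∀ p ∈ A, 0 ≤ p.1 ∧ 0 ≤ p.2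
  ha : 0 < a
  hamin : ∀ p ∈ A, p.1 ≠ 0 → a ≤ p.1
  ha' : ∀ p ∈ A, p.1 ≤ a'
  hb : 0 < b
  hbmin : ∀ p ∈ A, p.2 ≠ 0 → b ≤ p.2
  hb' : ∀ p ∈ A, p.2 ≤ b'
  hca : Int.gcd a a' = 1
  hcb : Int.gcd b b' = 1
  m00 : ((0:ℤ),(0:ℤ)) ∈ A
  ma0 : ((a:ℤ),(0:ℤ)) ∈ A
  m0b : ((0:ℤ),(b:ℤ)) ∈ A
  mA0 : ((a':ℤ),(0:ℤ)) ∈ A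
  m0B : ((0:ℤ),(b':ℤ)) ∈ A
  mab : ((a:ℤ),(b:ℤ)) ∈ A
  maB : ((a:ℤ),(b':ℤ)) ∈ A
  mAb : ((a':ℤ),(b:ℤ)) ∈ A
  mAB : ((a':ℤ),(b':ℤ)) ∈ A

namespace Ctx

lemma haa' {A : Finset (ℤ × ℤ)} {a a' b b' : ℤ} (C : Ctx A a a' b b') : a ≤ a' :=
  C.ha' _ C.ma0
lemma hbb' {A : Finset (ℤ × ℤ)} {a a' b b' : ℤ} (C : Ctx A a a' b b') : b ≤ b' :=
  C.hb' _ C.m0b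
lemma hA' {A : Finset (ℤ × ℤ)} {a a' b b' : ℤ} (C : Ctx A a a' b b') : 0 < a' :=
  lt_of_lt_of_le C.ha C.haa'
lemma hB' {A : Finset (ℤ × ℤ)} {a a' b b' : ℤ} (C : Ctx A a a' b b') : 0 < b' :=
  lt_of_lt_of_le C.hb C.hbb'

lemma gridMem {A : Finset (ℤ × ℤ)} {a a' b b' : ℤ} (C : Ctx A a a' b b')
    (k x₁ x₂ y₁ y₂ : ℕ) (hx : x₁ + x₂ ≤ k) (hy : y₁ + y₂ ≤ k) :
    (((x₁:ℤ)*a + (x₂:ℤ)*a', (y₁:ℤ)*b + (y₂:ℤ)*b') : ℤ × ℤ) ∈ iterSum k A :=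
  grid_mem A a a' b b' C.m00 C.ma0 C.m0b C.mA0 C.m0B C.mab C.maB C.mAb C.mAB
    k x₁ x₂ y₁ y₂ hx hy

end Ctx
lemma sum_map_sub_const (M : Multiset (ℤ × ℤ)) (c : ℤ) (f : ℤ × ℤ → ℤ) :
    (M.map (fun p => c - f p)).sum = (Multiset.card M : ℤ) * c - (M.map f).sum := by
  induction M using Multiset.induction with
  | empty => simp
  | cons p t ih =>
    simp only [Multiset.map_cons, Multiset.sum_cons, Multiset.card_cons, ih]
    push_cast; ring

set_option maxHeartbeats 2000000 in
lemma topx {A : Finset (ℤ × ℤ)} {a a' b b' : ℤ} (C : Ctx A a a' b b') (k : ℕ)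
    (hk1 : 2*a'^2 ≤ (k:ℤ)) (hk2 : 2*b'^2 ≤ (k:ℤ))
    (s : Multiset (ℤ × ℤ)) (hcard : Multiset.card s = 2*k) (hmem : ∀ p ∈ s, p ∈ A)
    (hD : 2*(k:ℤ)*a' - (s.map Prod.fst).sum ≤ a'^2) :
    ((s.map Prod.fst).sum - (k:ℤ)*a', (s.map Prod.snd).sum - (k:ℤ)*b')
      ∈ iterSum k A - iterSum k A := by
  classical
  have hA' := C.hA'
  have hB' := C.hB'
  have haa' := C.haa'
  have hbb' := C.hbb'
  have hbb2 : b*b' ≤ b'^2 := by nlinarith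
  have haa2 : a*a' ≤ a'^2 := by nlinarith
  have hbsq : b' ≤ b'^2 := by nlinarith
  have hasq : a' ≤ a'^2 := by nlinarith
  set x := (s.map Prod.fst).sum with hx_def
  set y := (s.map Prod.snd).sum with hy_def
  set sRest := s.filter (fun p => p.1 = a') with hr_def
  set sBad := s.filter (fun p => ¬ p.1 = a') with hbad_def
  have hsplit : sRest + sBad = s := Multiset.filter_add_not _ s
  set m := Multiset.card sBad with hm_def
  set mR := Multiset.card sRest with hmR_def
  have hcards : mR + m = 2*k := by
    have h := congrArg Multiset.card hsplit
    simp only [Multiset.card_add] at h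
    omega
  have hBadA : ∀ p ∈ sBad, p ∈ A ∧ p.1 ≠ a' := by
    intro p hp
    exact ⟨hmem p (Multiset.mem_of_mem_filter hp), (Multiset.mem_filter.mp hp).2⟩
  have hRestA : ∀ p ∈ sRest, p ∈ A ∧ p.1 = a' := by
    intro p hp
    exact ⟨hmem p (Multiset.mem_of_mem_filter hp), (Multiset.mem_filter.mp hp).2⟩
  have hxsplit : (sRest.map Prod.fst).sum + (sBad.map Prod.fst).sum = x := by
    rw [hx_def, ← hsplit, Multiset.map_add, Multiset.sum_add]
  have hysplit : (sRest.map Prod.snd).sum + (sBad.map Prod.snd).sum = y := by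
    rw [hy_def, ← hsplit, Multiset.map_add, Multiset.sum_add]
  have hRfst : (sRest.map Prod.fst).sum = (mR:ℤ) * a' := by
    have h := sum_eq_card_mul (sRest.map Prod.fst) a' (by
      intro z hz
      obtain ⟨p, hp, rfl⟩ := Multiset.mem_map.mp hz
      exact (hRestA p hp).2)
    rwa [Multiset.card_map] at h
  set SBF := (sBad.map Prod.fst).sum with hSBF_def
  set g := (sBad.map Prod.snd).sum with hg_def
  set SR := (sRest.map Prod.snd).sum with hSR_def
  have hSBF_ub : SBF ≤ (m:ℤ)*(a'-1) := by
    have h := sum_le_card_mul (sBad.map Prod.fst) (a'-1) (by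
      intro z hz
      obtain ⟨p, hp, rfl⟩ := Multiset.mem_map.mp hz
      have h1 := C.ha' p (hBadA p hp).1
      have h2 := (hBadA p hp).2
      omega)
    rwa [Multiset.card_map] at h
  have hSBF_lb : 0 ≤ SBF := by
    have h := card_mul_le_sum (sBad.map Prod.fst) 0 (by
      intro z hz
      obtain ⟨p, hp, rfl⟩ := Multiset.mem_map.mp hz
      exact (C.hnn p (hBadA p hp).1).1)
    simpa using h
  have hg_lb : 0 ≤ g := by
    have h := card_mul_le_sum (sBad.map Prod.snd) 0 (by
      intro z hz
      obtain ⟨p, hp, rfl⟩ := Multiset.mem_map.mp hz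
      exact (C.hnn p (hBadA p hp).1).2)
    simpa using h
  have hSR_lb : 0 ≤ SR := by
    have h := card_mul_le_sum (sRest.map Prod.snd) 0 (by
      intro z hz
      obtain ⟨p, hp, rfl⟩ := Multiset.mem_map.mp hz
      exact (C.hnn p (hRestA p hp).1).2)
    simpa using h
  have hSR_ub : SR ≤ (mR:ℤ)*b' := by
    have h := sum_le_card_mul (sRest.map Prod.snd) b' (by
      intro z hz
      obtain ⟨p, hp, rfl⟩ := Multiset.mem_map.mp hz
      exact C.hb' p (hRestA p hp).1)
    rwa [Multiset.card_map] at h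
  have hmcast : (mR:ℤ) = 2*(k:ℤ) - m := by
    have h : (mR:ℤ) + m = 2*(k:ℤ) := by exact_mod_cast hcards
    linarith
  have hxval : x = (mR:ℤ)*a' + SBF := by linarith [hxsplit, hRfst]
  have hm_le_D : (m:ℤ) ≤ 2*(k:ℤ)*a' - x := by
    have : 2*(k:ℤ)*a' - x = (m:ℤ)*a' - SBF := by rw [hxval, hmcast]; ring
    rw [this]
    have hexp : (m:ℤ)*(a'-1) = m*a' - m := by ring
    linarith
  have hmA : (m:ℤ) ≤ a'^2 := le_trans hm_le_D hD
  have hm_k : m ≤ k := by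
    have h1 : (1:ℤ) ≤ a'^2 := by nlinarith
    have : (m:ℤ) ≤ (k:ℤ) := by linarith
    exact_mod_cast this
  by_cases hS : SR < b*b'
  · -- T4 : almost all y-mass is inside sBad; v = actual points, w = (0, k b')
    set sNZ2 := sRest.filter (fun p => ¬ p.2 = 0) with hnz2_def
    set sZ2 := sRest.filter (fun p => p.2 = 0) with hz2_def
    have hsplit2 : sZ2 + sNZ2 = sRest := Multiset.filter_add_not _ sRest
    set m₂ := Multiset.card sNZ2 with hm2_def
    have hNZ2A : ∀ p ∈ sNZ2, p ∈ A ∧ p.1 = a' ∧ p.2 ≠ 0 := by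
      intro p hp
      have h1 := hRestA p (Multiset.mem_of_mem_filter hp)
      exact ⟨h1.1, h1.2, (Multiset.mem_filter.mp hp).2⟩
    have hSRsplit : (sZ2.map Prod.snd).sum + (sNZ2.map Prod.snd).sum = SR := by
      rw [hSR_def, ← hsplit2, Multiset.map_add, Multiset.sum_add]
    have hZ0 : (sZ2.map Prod.snd).sum = 0 := by
      have h := sum_eq_card_mul (sZ2.map Prod.snd) 0 (by
        intro z hz
        obtain ⟨p, hp, rfl⟩ := Multiset.mem_map.mp hz
        exact (Multiset.mem_filter.mp hp).2)
      simpa using h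
    have hNZ2sum : (sNZ2.map Prod.snd).sum = SR := by linarith
    have hm2 : (m₂:ℤ) ≤ SR := by
      have h := card_le_sum_int (sNZ2.map Prod.snd) (by
        intro z hz
        obtain ⟨p, hp, rfl⟩ := Multiset.mem_map.mp hz
        have := C.hbmin p (hNZ2A p hp).1 (hNZ2A p hp).2.2
        linarith [C.hb])
      rw [Multiset.card_map, hNZ2sum] at h
      exact h
    have hkk : m + m₂ ≤ k := by
      have : (m:ℤ) + m₂ ≤ (k:ℤ) := by linarith
      exact_mod_cast this
    set v := (sBad + sNZ2) + Multiset.replicate (k - (m + m₂)) ((a':ℤ), (0:ℤ)) with hv_def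
    have hvcard : Multiset.card v = k := by
      simp only [hv_def, Multiset.card_add, Multiset.card_replicate]
      omega
    have hvmem : ∀ p ∈ v, p ∈ A := by
      intro p hp
      rcases Multiset.mem_add.mp hp with h | h
      · rcases Multiset.mem_add.mp h with h' | h'
        · exact (hBadA p h').1
        · exact (hNZ2A p h').1
      · rw [Multiset.eq_of_mem_replicate h]; exact C.mA0
    have hNZ2fst : (sNZ2.map Prod.fst).sum = (m₂:ℤ)*a' := by
      have h := sum_eq_card_mul (sNZ2.map Prod.fst) a' (by
        intro z hz
        obtain ⟨p, hp, rfl⟩ := Multiset.mem_map.mp hz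
        exact (hNZ2A p hp).2.1)
      rwa [Multiset.card_map] at h
    have hcastkk : ((k - (m + m₂) : ℕ) : ℤ) = (k:ℤ) - m - m₂ := by
      have := hkk; push_cast [Nat.cast_sub hkk]; ring
    have hvfst : (v.map Prod.fst).sum = x - (k:ℤ)*a' := by
      simp only [hv_def, Multiset.map_add, Multiset.sum_add, Multiset.map_replicate,
        Multiset.sum_replicate, nsmul_eq_mul]
      rw [hNZ2fst, hcastkk, hxval, hmcast]
      ring
    have hvsnd : (v.map Prod.snd).sum = y := by
      simp only [hv_def, Multiset.map_add, Multiset.sum_add, Multiset.map_replicate,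
        Multiset.sum_replicate, nsmul_eq_mul]
      rw [hNZ2sum]
      linarith
    have hvsum : v.sum = ((x - (k:ℤ)*a', y) : ℤ × ℤ) := by
      have h1 := fst_sum v
      have h2 := snd_sum v
      rw [Prod.ext_iff]
      exact ⟨by rw [h1, hvfst], by rw [h2, hvsnd]⟩
    have hvI := mem_iterSum_of_multiset v hvcard hvmem
    rw [hvsum] at hvI
    have hwI := C.gridMem k 0 0 0 k (by omega) (by omega)
    refine Finset.mem_sub.mpr ⟨_, hvI, _, hwI, ?_⟩
    rw [Prod.ext_iff]
    refine ⟨by simp, ?_⟩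
    simp only [Prod.snd_sub]
    push_cast
    ring
  · by_cases hE : (mR:ℤ)*b' - SR < b*b'
    · -- T3 : almost all rest points are (a',b'); v = actual pts + (a',b') fills, w = 0
      set sBad2 := sRest.filter (fun p => ¬ p.2 = b') with hbad2_def
      set sFull := sRest.filter (fun p => p.2 = b') with hfull_def
      have hsplit2 : sFull + sBad2 = sRest := Multiset.filter_add_not _ sRest
      set m₂ := Multiset.card sBad2 with hm2_def
      set mF := Multiset.card sFull with hmF_def
      have hm2cards : mF + m₂ = mR := by
        have h := congrArg Multiset.card hsplit2
        simp only [Multiset.card_add] at h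
        omega
      have hBad2A : ∀ p ∈ sBad2, p ∈ A ∧ p.1 = a' ∧ p.2 ≠ b' := by
        intro p hp
        have h1 := hRestA p (Multiset.mem_of_mem_filter hp)
        exact ⟨h1.1, h1.2, (Multiset.mem_filter.mp hp).2⟩
      have hFullA : ∀ p ∈ sFull, p ∈ A ∧ p.1 = a' ∧ p.2 = b' := by
        intro p hp
        have h1 := hRestA p (Multiset.mem_of_mem_filter hp)
        exact ⟨h1.1, h1.2, (Multiset.mem_filter.mp hp).2⟩
      have hSRsplit : (sFull.map Prod.snd).sum + (sBad2.map Prod.snd).sum = SR := by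
        rw [hSR_def, ← hsplit2, Multiset.map_add, Multiset.sum_add]
      have hFullsum : (sFull.map Prod.snd).sum = (mF:ℤ)*b' := by
        have h := sum_eq_card_mul (sFull.map Prod.snd) b' (by
          intro z hz
          obtain ⟨p, hp, rfl⟩ := Multiset.mem_map.mp hz
          exact (hFullA p hp).2.2)
        rwa [Multiset.card_map] at h
      have hm2 : (m₂:ℤ) ≤ (mR:ℤ)*b' - SR := by
        have h := card_le_sum_int (sBad2.map (fun p => b' - p.2)) (by
          intro z hz
          obtain ⟨p, hp, rfl⟩ := Multiset.mem_map.mp hz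
          have h1 := C.hb' p (hBad2A p hp).1
          have h2 := (hBad2A p hp).2.2
          omega)
        rw [Multiset.card_map, sum_map_sub_const] at h
        have hm2cast : (mF:ℤ) + m₂ = mR := by exact_mod_cast hm2cards
        have hBad2snd : (sBad2.map Prod.snd).sum = SR - (mF:ℤ)*b' := by linarith
        rw [hBad2snd] at h
        have key : (m₂:ℤ)*b' - (SR - (mF:ℤ)*b') = (mR:ℤ)*b' - SR := by
          rw [← hm2cast]; ring
        linarith
      have hkk : m + m₂ ≤ k := by
        have h1 : (m₂:ℤ) < b*b' := lt_of_le_of_lt hm2 hE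
        have : (m:ℤ) + m₂ ≤ (k:ℤ) := by linarith
        exact_mod_cast this
      set v := (sBad + sBad2) + Multiset.replicate (k - (m + m₂)) ((a':ℤ), (b':ℤ)) with hv_def
      have hvcard : Multiset.card v = k := by
        simp only [hv_def, Multiset.card_add, Multiset.card_replicate]
        omega
      have hvmem : ∀ p ∈ v, p ∈ A := by
        intro p hp
        rcases Multiset.mem_add.mp hp with h | h
        · rcases Multiset.mem_add.mp h with h' | h'
          · exact (hBadA p h').1
          · exact (hBad2A p h').1
        · rw [Multiset.eq_of_mem_replicate h]; exact C.mAB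
      have hBad2fst : (sBad2.map Prod.fst).sum = (m₂:ℤ)*a' := by
        have h := sum_eq_card_mul (sBad2.map Prod.fst) a' (by
          intro z hz
          obtain ⟨p, hp, rfl⟩ := Multiset.mem_map.mp hz
          exact (hBad2A p hp).2.1)
        rwa [Multiset.card_map] at h
      have hcastkk : ((k - (m + m₂) : ℕ) : ℤ) = (k:ℤ) - m - m₂ := by
        push_cast [Nat.cast_sub hkk]; ring
      have hm2cast : (mF:ℤ) + m₂ = mR := by exact_mod_cast hm2cards
      have hvfst : (v.map Prod.fst).sum = x - (k:ℤ)*a' := by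
        simp only [hv_def, Multiset.map_add, Multiset.sum_add, Multiset.map_replicate,
          Multiset.sum_replicate, nsmul_eq_mul]
        rw [hBad2fst, hcastkk, hxval, hmcast]
        ring
      have hvsnd : (v.map Prod.snd).sum = y - (k:ℤ)*b' := by
        simp only [hv_def, Multiset.map_add, Multiset.sum_add, Multiset.map_replicate,
          Multiset.sum_replicate, nsmul_eq_mul]
        have hBad2snd : (sBad2.map Prod.snd).sum = SR - (mF:ℤ)*b' := by
          linarith [hSRsplit, hFullsum]
        rw [hBad2snd, hcastkk]
        have : (mF:ℤ) = mR - m₂ := by linarith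
        rw [this, hmcast]
        linarith [hysplit]
      have hvsum : v.sum = ((x - (k:ℤ)*a', y - (k:ℤ)*b') : ℤ × ℤ) := by
        rw [Prod.ext_iff]
        exact ⟨by rw [fst_sum v, hvfst], by rw [snd_sum v, hvsnd]⟩
      have hvI := mem_iterSum_of_multiset v hvcard hvmem
      rw [hvsum] at hvI
      have hwI := C.gridMem k 0 0 0 0 (by omega) (by omega)
      refine Finset.mem_sub.mpr ⟨_, hvI, _, hwI, ?_⟩
      rw [Prod.ext_iff]
      constructor <;> simp
    · -- T12 : main residue case
      push_neg at hS hE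
      have hm1cast : ((k - m : ℕ) : ℤ) = (k:ℤ) - m := by push_cast [Nat.cast_sub hm_k]; ring
      have hM1b : b' ≤ ((k - m : ℕ):ℤ) := by
        rw [hm1cast]
        linarith
      have hM2b : b' ≤ (k:ℤ) := by linarith
      have hmRb : (mR:ℤ)*b' = (2*(k:ℤ) - m)*b' := by rw [hmcast]
      have hexp1 : (2*(k:ℤ) - m)*b' = 2*(k:ℤ)*b' - (m:ℤ)*b' := by ring
      have hmb : (m:ℤ)*b' ≤ a'^2*b' :=
        mul_le_mul_of_nonneg_right hmA (le_of_lt hB')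
      have h₁ : -((((k - m : ℕ):ℤ) - b) * b') ≤ (k:ℤ)*b' - SR := by
        rw [hm1cast]
        have hexp2 : ((k:ℤ) - m - b)*b' = (k:ℤ)*b' - (m:ℤ)*b' - b*b' := by ring
        linarith
      have h₂ : (k:ℤ)*b' - SR ≤ ((k:ℤ) - b) * b' := by
        have hexp3 : ((k:ℤ) - b)*b' = (k:ℤ)*b' - b*b' := by ring
        linarith
      obtain ⟨w₁, w₂, r₁, r₂, hw12, hr12, heq⟩ :=
        rep_diff b b' C.hb hB' C.hcb (k - m) k hM1b hM2b ((k:ℤ)*b' - SR) h₁ h₂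
      have hr12' : m + r₁ + r₂ ≤ k := by omega
      set n₀ := k - (m + r₁ + r₂) with hn0_def
      set v := sBad + (Multiset.replicate r₁ ((a':ℤ), (b:ℤ)) +
        Multiset.replicate r₂ ((a':ℤ), (b':ℤ)) +
        Multiset.replicate n₀ ((a':ℤ), (0:ℤ))) with hv_def
      have hvcard : Multiset.card v = k := by
        simp only [hv_def, Multiset.card_add, Multiset.card_replicate]
        omega
      have hvmem : ∀ p ∈ v, p ∈ A := by
        intro p hp
        rcases Multiset.mem_add.mp hp with h | h
        · exact (hBadA p h).1
        · rcases Multiset.mem_add.mp h with h' | h'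
          · rcases Multiset.mem_add.mp h' with h'' | h''
            · rw [Multiset.eq_of_mem_replicate h'']; exact C.mAb
            · rw [Multiset.eq_of_mem_replicate h'']; exact C.mAB
          · rw [Multiset.eq_of_mem_replicate h']; exact C.mA0
      have hn0cast : (r₁:ℤ) + r₂ + (n₀:ℤ) = (k:ℤ) - m := by
        have h0 : r₁ + r₂ + n₀ = k - m := by omega
        have h2 : (r₁:ℤ) + r₂ + n₀ = ((k - m : ℕ):ℤ) := by
          rw [← Nat.cast_add, ← Nat.cast_add, h0]
        rw [hm1cast] at h2
        linarith
      have hvfst : (v.map Prod.fst).sum = x - (k:ℤ)*a' := by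
        simp only [hv_def, Multiset.map_add, Multiset.sum_add, Multiset.map_replicate,
          Multiset.sum_replicate, nsmul_eq_mul]
        rw [hxval, hmcast]
        linear_combination a' * hn0cast
      have hvsnd : (v.map Prod.snd).sum = g + ((r₁:ℤ)*b + (r₂:ℤ)*b') := by
        simp only [hv_def, Multiset.map_add, Multiset.sum_add, Multiset.map_replicate,
          Multiset.sum_replicate, nsmul_eq_mul]
        ring
      have hvsum : v.sum = ((x - (k:ℤ)*a', g + ((r₁:ℤ)*b + (r₂:ℤ)*b')) : ℤ × ℤ) := by
        rw [Prod.ext_iff]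
        exact ⟨by rw [fst_sum v, hvfst], by rw [snd_sum v, hvsnd]⟩
      have hvI := mem_iterSum_of_multiset v hvcard hvmem
      rw [hvsum] at hvI
      have hwI := C.gridMem k 0 0 w₁ w₂ (by omega) (by omega)
      refine Finset.mem_sub.mpr ⟨_, hvI, _, hwI, ?_⟩
      rw [Prod.ext_iff]
      constructor
      · simp
      · simp only [Prod.snd_sub]
        linarith [hysplit, heq]
set_option maxHeartbeats 2000000 in
lemma botx {A : Finset (ℤ × ℤ)} {a a' b b' : ℤ} (C : Ctx A a a' b b') (k : ℕ)
    (hk1 : 2*a'^2 ≤ (k:ℤ)) (hk2 : 2*b'^2 ≤ (k:ℤ))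
    (s : Multiset (ℤ × ℤ)) (hcard : Multiset.card s = 2*k) (hmem : ∀ p ∈ s, p ∈ A)
    (hXlow : (s.map Prod.fst).sum ≤ a'^2) :
    ((s.map Prod.fst).sum - (k:ℤ)*a', (s.map Prod.snd).sum - (k:ℤ)*b')
      ∈ iterSum k A - iterSum k A := by
  classical
  have hA' := C.hA'
  have hB' := C.hB'
  have haa' := C.haa'
  have hbb' := C.hbb'
  have hbb2 : b*b' ≤ b'^2 := by nlinarith
  have hbsq : b' ≤ b'^2 := by nlinarith
  set x := (s.map Prod.fst).sum with hx_def
  set y := (s.map Prod.snd).sum with hy_def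
  set sZero := s.filter (fun p => p.1 = 0) with hz_def
  set sNZ := s.filter (fun p => ¬ p.1 = 0) with hnz_def
  have hsplit : sZero + sNZ = s := Multiset.filter_add_not _ s
  set m := Multiset.card sNZ with hm_def
  set mR := Multiset.card sZero with hmR_def
  have hcards : mR + m = 2*k := by
    have h := congrArg Multiset.card hsplit
    simp only [Multiset.card_add] at h
    omega
  have hNZA : ∀ p ∈ sNZ, p ∈ A ∧ p.1 ≠ 0 := by
    intro p hp
    exact ⟨hmem p (Multiset.mem_of_mem_filter hp), (Multiset.mem_filter.mp hp).2⟩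
  have hZA : ∀ p ∈ sZero, p ∈ A ∧ p.1 = 0 := by
    intro p hp
    exact ⟨hmem p (Multiset.mem_of_mem_filter hp), (Multiset.mem_filter.mp hp).2⟩
  have hxsplit : (sZero.map Prod.fst).sum + (sNZ.map Prod.fst).sum = x := by
    rw [hx_def, ← hsplit, Multiset.map_add, Multiset.sum_add]
  have hysplit : (sZero.map Prod.snd).sum + (sNZ.map Prod.snd).sum = y := by
    rw [hy_def, ← hsplit, Multiset.map_add, Multiset.sum_add]
  have hZfst : (sZero.map Prod.fst).sum = 0 := by
    have h := sum_eq_card_mul (sZero.map Prod.fst) 0 (by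
      intro z hz
      obtain ⟨p, hp, rfl⟩ := Multiset.mem_map.mp hz
      exact (hZA p hp).2)
    simpa using h
  have hNZfst : (sNZ.map Prod.fst).sum = x := by linarith
  set g := (sNZ.map Prod.snd).sum with hg_def
  set SR := (sZero.map Prod.snd).sum with hSR_def
  have hg_lb : 0 ≤ g := by
    have h := card_mul_le_sum (sNZ.map Prod.snd) 0 (by
      intro z hz
      obtain ⟨p, hp, rfl⟩ := Multiset.mem_map.mp hz
      exact (C.hnn p (hNZA p hp).1).2)
    simpa using h
  have hSR_lb : 0 ≤ SR := by
    have h := card_mul_le_sum (sZero.map Prod.snd) 0 (by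
      intro z hz
      obtain ⟨p, hp, rfl⟩ := Multiset.mem_map.mp hz
      exact (C.hnn p (hZA p hp).1).2)
    simpa using h
  have hSR_ub : SR ≤ (mR:ℤ)*b' := by
    have h := sum_le_card_mul (sZero.map Prod.snd) b' (by
      intro z hz
      obtain ⟨p, hp, rfl⟩ := Multiset.mem_map.mp hz
      exact C.hb' p (hZA p hp).1)
    rwa [Multiset.card_map] at h
  have hmcast : (mR:ℤ) = 2*(k:ℤ) - m := by
    have h : (mR:ℤ) + m = 2*(k:ℤ) := by exact_mod_cast hcards
    linarith
  have hm_le_x : (m:ℤ) ≤ x := by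
    have h := card_le_sum_int (sNZ.map Prod.fst) (by
      intro z hz
      obtain ⟨p, hp, rfl⟩ := Multiset.mem_map.mp hz
      have := C.hamin p (hNZA p hp).1 (hNZA p hp).2
      linarith [C.ha])
    rw [Multiset.card_map, hNZfst] at h
    exact h
  have hmA : (m:ℤ) ≤ a'^2 := le_trans hm_le_x hXlow
  have hm_k : m ≤ k := by
    have h1 : (1:ℤ) ≤ a'^2 := by nlinarith
    have : (m:ℤ) ≤ (k:ℤ) := by linarith
    exact_mod_cast this
  by_cases hS : SR < b*b'
  · -- B4 : v = actual nonzero points (both coords), w = k(a',b')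
    set sNZ2 := sZero.filter (fun p => ¬ p.2 = 0) with hnz2_def
    set sZ2 := sZero.filter (fun p => p.2 = 0) with hz2_def
    have hsplit2 : sZ2 + sNZ2 = sZero := Multiset.filter_add_not _ sZero
    set m₂ := Multiset.card sNZ2 with hm2_def
    have hNZ2A : ∀ p ∈ sNZ2, p ∈ A ∧ p.1 = 0 ∧ p.2 ≠ 0 := by
      intro p hp
      have h1 := hZA p (Multiset.mem_of_mem_filter hp)
      exact ⟨h1.1, h1.2, (Multiset.mem_filter.mp hp).2⟩
    have hSRsplit : (sZ2.map Prod.snd).sum + (sNZ2.map Prod.snd).sum = SR := by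
      rw [hSR_def, ← hsplit2, Multiset.map_add, Multiset.sum_add]
    have hZ0 : (sZ2.map Prod.snd).sum = 0 := by
      have h := sum_eq_card_mul (sZ2.map Prod.snd) 0 (by
        intro z hz
        obtain ⟨p, hp, rfl⟩ := Multiset.mem_map.mp hz
        exact (Multiset.mem_filter.mp hp).2)
      simpa using h
    have hNZ2sum : (sNZ2.map Prod.snd).sum = SR := by linarith
    have hm2 : (m₂:ℤ) ≤ SR := by
      have h := card_le_sum_int (sNZ2.map Prod.snd) (by
        intro z hz
        obtain ⟨p, hp, rfl⟩ := Multiset.mem_map.mp hz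
        have := C.hbmin p (hNZ2A p hp).1 (hNZ2A p hp).2.2
        linarith [C.hb])
      rw [Multiset.card_map, hNZ2sum] at h
      exact h
    have hkk : m + m₂ ≤ k := by
      have : (m:ℤ) + m₂ ≤ (k:ℤ) := by linarith
      exact_mod_cast this
    set v := (sNZ + sNZ2) + Multiset.replicate (k - (m + m₂)) ((0:ℤ), (0:ℤ)) with hv_def
    have hvcard : Multiset.card v = k := by
      simp only [hv_def, Multiset.card_add, Multiset.card_replicate]
      omega
    have hvmem : ∀ p ∈ v, p ∈ A := by
      intro p hp
      rcases Multiset.mem_add.mp hp with h | h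
      · rcases Multiset.mem_add.mp h with h' | h'
        · exact (hNZA p h').1
        · exact (hNZ2A p h').1
      · rw [Multiset.eq_of_mem_replicate h]; exact C.m00
    have hNZ2fst : (sNZ2.map Prod.fst).sum = 0 := by
      have h := sum_eq_card_mul (sNZ2.map Prod.fst) 0 (by
        intro z hz
        obtain ⟨p, hp, rfl⟩ := Multiset.mem_map.mp hz
        exact (hNZ2A p hp).2.1)
      simpa using h
    have hvfst : (v.map Prod.fst).sum = x := by
      simp only [hv_def, Multiset.map_add, Multiset.sum_add, Multiset.map_replicate,
        Multiset.sum_replicate, nsmul_eq_mul]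
      rw [hNZfst, hNZ2fst]
      ring
    have hvsnd : (v.map Prod.snd).sum = y := by
      simp only [hv_def, Multiset.map_add, Multiset.sum_add, Multiset.map_replicate,
        Multiset.sum_replicate, nsmul_eq_mul]
      rw [hNZ2sum]
      linarith
    have hvsum : v.sum = ((x, y) : ℤ × ℤ) := by
      rw [Prod.ext_iff]
      exact ⟨by rw [fst_sum v, hvfst], by rw [snd_sum v, hvsnd]⟩
    have hvI := mem_iterSum_of_multiset v hvcard hvmem
    rw [hvsum] at hvI
    have hwI := C.gridMem k 0 k 0 k (by omega) (by omega)
    refine Finset.mem_sub.mpr ⟨_, hvI, _, hwI, ?_⟩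
    rw [Prod.ext_iff]
    constructor
    · simp only [Prod.fst_sub]; push_cast; ring
    · simp only [Prod.snd_sub]; push_cast; ring
  · by_cases hE : (mR:ℤ)*b' - SR < b*b'
    · -- B3 : v = actual pts + (0,b') fills, w = k(a',0)
      set sBad2 := sZero.filter (fun p => ¬ p.2 = b') with hbad2_def
      set sFull := sZero.filter (fun p => p.2 = b') with hfull_def
      have hsplit2 : sFull + sBad2 = sZero := Multiset.filter_add_not _ sZero
      set m₂ := Multiset.card sBad2 with hm2_def
      set mF := Multiset.card sFull with hmF_def
      have hm2cards : mF + m₂ = mR := by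
        have h := congrArg Multiset.card hsplit2
        simp only [Multiset.card_add] at h
        omega
      have hBad2A : ∀ p ∈ sBad2, p ∈ A ∧ p.1 = 0 ∧ p.2 ≠ b' := by
        intro p hp
        have h1 := hZA p (Multiset.mem_of_mem_filter hp)
        exact ⟨h1.1, h1.2, (Multiset.mem_filter.mp hp).2⟩
      have hFullA : ∀ p ∈ sFull, p ∈ A ∧ p.1 = 0 ∧ p.2 = b' := by
        intro p hp
        have h1 := hZA p (Multiset.mem_of_mem_filter hp)
        exact ⟨h1.1, h1.2, (Multiset.mem_filter.mp hp).2⟩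
      have hSRsplit : (sFull.map Prod.snd).sum + (sBad2.map Prod.snd).sum = SR := by
        rw [hSR_def, ← hsplit2, Multiset.map_add, Multiset.sum_add]
      have hFullsum : (sFull.map Prod.snd).sum = (mF:ℤ)*b' := by
        have h := sum_eq_card_mul (sFull.map Prod.snd) b' (by
          intro z hz
          obtain ⟨p, hp, rfl⟩ := Multiset.mem_map.mp hz
          exact (hFullA p hp).2.2)
        rwa [Multiset.card_map] at h
      have hm2cast : (mF:ℤ) + m₂ = mR := by exact_mod_cast hm2cards
      have hm2 : (m₂:ℤ) ≤ (mR:ℤ)*b' - SR := by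
        have h := card_le_sum_int (sBad2.map (fun p => b' - p.2)) (by
          intro z hz
          obtain ⟨p, hp, rfl⟩ := Multiset.mem_map.mp hz
          have h1 := C.hb' p (hBad2A p hp).1
          have h2 := (hBad2A p hp).2.2
          omega)
        rw [Multiset.card_map, sum_map_sub_const] at h
        have hBad2snd : (sBad2.map Prod.snd).sum = SR - (mF:ℤ)*b' := by linarith
        rw [hBad2snd] at h
        have key : (m₂:ℤ)*b' - (SR - (mF:ℤ)*b') = (mR:ℤ)*b' - SR := by
          rw [← hm2cast]; ring
        linarith
      have hkk : m + m₂ ≤ k := by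
        have h1 : (m₂:ℤ) < b*b' := lt_of_le_of_lt hm2 hE
        have : (m:ℤ) + m₂ ≤ (k:ℤ) := by linarith
        exact_mod_cast this
      set v := (sNZ + sBad2) + Multiset.replicate (k - (m + m₂)) ((0:ℤ), (b':ℤ)) with hv_def
      have hvcard : Multiset.card v = k := by
        simp only [hv_def, Multiset.card_add, Multiset.card_replicate]
        omega
      have hvmem : ∀ p ∈ v, p ∈ A := by
        intro p hp
        rcases Multiset.mem_add.mp hp with h | h
        · rcases Multiset.mem_add.mp h with h' | h'
          · exact (hNZA p h').1
          · exact (hBad2A p h').1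
        · rw [Multiset.eq_of_mem_replicate h]; exact C.m0B
      have hBad2fst : (sBad2.map Prod.fst).sum = 0 := by
        have h := sum_eq_card_mul (sBad2.map Prod.fst) 0 (by
          intro z hz
          obtain ⟨p, hp, rfl⟩ := Multiset.mem_map.mp hz
          exact (hBad2A p hp).2.1)
        simpa using h
      have hcastkk : ((k - (m + m₂) : ℕ) : ℤ) = (k:ℤ) - m - m₂ := by
        push_cast [Nat.cast_sub hkk]; ring
      have hvfst : (v.map Prod.fst).sum = x := by
        simp only [hv_def, Multiset.map_add, Multiset.sum_add, Multiset.map_replicate,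
          Multiset.sum_replicate, nsmul_eq_mul]
        rw [hNZfst, hBad2fst]
        ring
      have hvsnd : (v.map Prod.snd).sum = y - (k:ℤ)*b' := by
        simp only [hv_def, Multiset.map_add, Multiset.sum_add, Multiset.map_replicate,
          Multiset.sum_replicate, nsmul_eq_mul]
        have hBad2snd : (sBad2.map Prod.snd).sum = SR - (mF:ℤ)*b' := by
          linarith [hSRsplit, hFullsum]
        rw [hBad2snd, hcastkk]
        have hmF : (mF:ℤ) = mR - m₂ := by linarith
        rw [hmF, hmcast]
        linarith [hysplit]
      have hvsum : v.sum = ((x, y - (k:ℤ)*b') : ℤ × ℤ) := by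
        rw [Prod.ext_iff]
        exact ⟨by rw [fst_sum v, hvfst], by rw [snd_sum v, hvsnd]⟩
      have hvI := mem_iterSum_of_multiset v hvcard hvmem
      rw [hvsum] at hvI
      have hwI := C.gridMem k 0 k 0 0 (by omega) (by omega)
      refine Finset.mem_sub.mpr ⟨_, hvI, _, hwI, ?_⟩
      rw [Prod.ext_iff]
      constructor
      · simp only [Prod.fst_sub]; push_cast; ring
      · simp only [Prod.snd_sub]; push_cast; ring
    · -- B12 : main residue case
      push_neg at hS hE
      have hm1cast : ((k - m : ℕ) : ℤ) = (k:ℤ) - m := by push_cast [Nat.cast_sub hm_k]; ring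
      have hM1b : b' ≤ ((k - m : ℕ):ℤ) := by
        rw [hm1cast]
        linarith
      have hM2b : b' ≤ (k:ℤ) := by linarith
      have hmRb : (mR:ℤ)*b' = (2*(k:ℤ) - m)*b' := by rw [hmcast]
      have hexp1 : (2*(k:ℤ) - m)*b' = 2*(k:ℤ)*b' - (m:ℤ)*b' := by ring
      have hmb : (m:ℤ)*b' ≤ a'^2*b' :=
        mul_le_mul_of_nonneg_right hmA (le_of_lt hB')
      have h₁ : -((((k - m : ℕ):ℤ) - b) * b') ≤ (k:ℤ)*b' - SR := by
        rw [hm1cast]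
        have hexp2 : ((k:ℤ) - m - b)*b' = (k:ℤ)*b' - (m:ℤ)*b' - b*b' := by ring
        linarith
      have h₂ : (k:ℤ)*b' - SR ≤ ((k:ℤ) - b) * b' := by
        have hexp3 : ((k:ℤ) - b)*b' = (k:ℤ)*b' - b*b' := by ring
        linarith
      obtain ⟨w₁, w₂, r₁, r₂, hw12, hr12, heq⟩ :=
        rep_diff b b' C.hb hB' C.hcb (k - m) k hM1b hM2b ((k:ℤ)*b' - SR) h₁ h₂
      have hr12' : m + r₁ + r₂ ≤ k := by omega
      set n₀ := k - (m + r₁ + r₂) with hn0_def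
      set v := sNZ + (Multiset.replicate r₁ ((0:ℤ), (b:ℤ)) +
        Multiset.replicate r₂ ((0:ℤ), (b':ℤ)) +
        Multiset.replicate n₀ ((0:ℤ), (0:ℤ))) with hv_def
      have hvcard : Multiset.card v = k := by
        simp only [hv_def, Multiset.card_add, Multiset.card_replicate]
        omega
      have hvmem : ∀ p ∈ v, p ∈ A := by
        intro p hp
        rcases Multiset.mem_add.mp hp with h | h
        · exact (hNZA p h).1
        · rcases Multiset.mem_add.mp h with h' | h'
          · rcases Multiset.mem_add.mp h' with h'' | h''
            · rw [Multiset.eq_of_mem_replicate h'']; exact C.m0b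
            · rw [Multiset.eq_of_mem_replicate h'']; exact C.m0B
          · rw [Multiset.eq_of_mem_replicate h']; exact C.m00
      have hvfst : (v.map Prod.fst).sum = x := by
        simp only [hv_def, Multiset.map_add, Multiset.sum_add, Multiset.map_replicate,
          Multiset.sum_replicate, nsmul_eq_mul]
        rw [hNZfst]
        ring
      have hvsnd : (v.map Prod.snd).sum = g + ((r₁:ℤ)*b + (r₂:ℤ)*b') := by
        simp only [hv_def, Multiset.map_add, Multiset.sum_add, Multiset.map_replicate,
          Multiset.sum_replicate, nsmul_eq_mul]
        ring
      have hvsum : v.sum = ((x, g + ((r₁:ℤ)*b + (r₂:ℤ)*b')) : ℤ × ℤ) := by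
        rw [Prod.ext_iff]
        exact ⟨by rw [fst_sum v, hvfst], by rw [snd_sum v, hvsnd]⟩
      have hvI := mem_iterSum_of_multiset v hvcard hvmem
      rw [hvsum] at hvI
      have hwI := C.gridMem k 0 k w₁ w₂ (by omega) (by omega)
      refine Finset.mem_sub.mpr ⟨_, hvI, _, hwI, ?_⟩
      rw [Prod.ext_iff]
      constructor
      · simp only [Prod.fst_sub]; push_cast; ring
      · simp only [Prod.snd_sub]
        linarith [hysplit, heq]
lemma iterSum_image {G H : Type*} [AddCommGroup G] [AddCommGroup H]
    [DecidableEq G] [DecidableEq H] (f : G ≃+ H) :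
    ∀ (k : ℕ) (A : Finset G), iterSum k (A.image f) = (iterSum k A).image f := by
  intro k
  induction k with
  | zero => intro A; simp [iterSum]
  | succ n ih =>
    intro A
    show A.image f + iterSum n (A.image f) = _
    rw [ih A]
    show A.image f + (iterSum n A).image f = (A + iterSum n A).image f
    exact (Finset.image_add f).symm

def swapE : (ℤ × ℤ) ≃+ (ℤ × ℤ) := AddEquiv.prodComm

lemma ctx_swap {A : Finset (ℤ × ℤ)} {a a' b b' : ℤ} (C : Ctx A a a' b b') :
    Ctx (A.image (swapE : (ℤ×ℤ) ≃+ (ℤ×ℤ))) b b' a a' := by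
  have himg : ∀ p : ℤ × ℤ, p ∈ A.image (swapE : (ℤ×ℤ) ≃+ (ℤ×ℤ)) ↔ (p.2, p.1) ∈ A := by
    intro p
    rw [Finset.mem_image]
    constructor
    · rintro ⟨q, hq, rfl⟩; exact hq
    · intro h; exact ⟨(p.2, p.1), h, rfl⟩
  refine ⟨?_, C.hb, ?_, ?_, C.ha, ?_, ?_, C.hcb, C.hca, ?_, ?_, ?_, ?_, ?_, ?_, ?_, ?_, ?_⟩
  · intro p hp; exact ⟨(C.hnn _ ((himg p).mp hp)).2, (C.hnn _ ((himg p).mp hp)).1⟩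
  · intro p hp h; exact C.hbmin _ ((himg p).mp hp) h
  · intro p hp; exact C.hb' _ ((himg p).mp hp)
  · intro p hp h; exact C.hamin _ ((himg p).mp hp) h
  · intro p hp; exact C.ha' _ ((himg p).mp hp)
  · exact (himg _).mpr C.m00
  · exact (himg _).mpr C.m0b
  · exact (himg _).mpr C.ma0
  · exact (himg _).mpr C.m0B
  · exact (himg _).mpr C.mA0
  · exact (himg _).mpr C.mab
  · exact (himg _).mpr C.mAb
  · exact (himg _).mpr C.maB
  · exact (himg _).mpr C.mAB

lemma swap_transfer {A : Finset (ℤ × ℤ)} (k : ℕ) (u : ℤ × ℤ)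
    (h : ((u.2, u.1) : ℤ × ℤ) ∈ iterSum k (A.image (swapE : (ℤ×ℤ) ≃+ (ℤ×ℤ)))
          - iterSum k (A.image (swapE : (ℤ×ℤ) ≃+ (ℤ×ℤ)))) :
    u ∈ iterSum k A - iterSum k A := by
  rw [iterSum_image swapE k A] at h
  obtain ⟨v', hv', w', hw', hvw⟩ := Finset.mem_sub.mp h
  obtain ⟨v, hv, rfl⟩ := Finset.mem_image.mp hv'
  obtain ⟨w, hw, rfl⟩ := Finset.mem_image.mp hw'
  refine Finset.mem_sub.mpr ⟨v, hv, w, hw, ?_⟩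
  have h1 : ((v.2 - w.2, v.1 - w.1) : ℤ × ℤ) = (u.2, u.1) := hvw
  rw [Prod.ext_iff] at h1
  rw [Prod.ext_iff]
  exact ⟨h1.2, h1.1⟩

lemma topy {A : Finset (ℤ × ℤ)} {a a' b b' : ℤ} (C : Ctx A a a' b b') (k : ℕ)
    (hk1 : 2*a'^2 ≤ (k:ℤ)) (hk2 : 2*b'^2 ≤ (k:ℤ))
    (s : Multiset (ℤ × ℤ)) (hcard : Multiset.card s = 2*k) (hmem : ∀ p ∈ s, p ∈ A)
    (hD : 2*(k:ℤ)*b' - (s.map Prod.snd).sum ≤ b'^2) :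
    ((s.map Prod.fst).sum - (k:ℤ)*a', (s.map Prod.snd).sum - (k:ℤ)*b')
      ∈ iterSum k A - iterSum k A := by
  apply swap_transfer k
  have hfst : ((s.map (swapE : (ℤ×ℤ) ≃+ (ℤ×ℤ))).map Prod.fst).sum = (s.map Prod.snd).sum := by
    rw [Multiset.map_map]; rfl
  have hsnd : ((s.map (swapE : (ℤ×ℤ) ≃+ (ℤ×ℤ))).map Prod.snd).sum = (s.map Prod.fst).sum := by
    rw [Multiset.map_map]; rfl
  have h := topx (ctx_swap C) k hk2 hk1 (s.map (swapE : (ℤ×ℤ) ≃+ (ℤ×ℤ)))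
    (by rw [Multiset.card_map]; exact hcard)
    (by intro p hp
        obtain ⟨q, hq, rfl⟩ := Multiset.mem_map.mp hp
        exact Finset.mem_image_of_mem _ (hmem q hq))
    (by rw [hfst]; exact hD)
  rw [hfst, hsnd] at h
  exact h

lemma boty {A : Finset (ℤ × ℤ)} {a a' b b' : ℤ} (C : Ctx A a a' b b') (k : ℕ)
    (hk1 : 2*a'^2 ≤ (k:ℤ)) (hk2 : 2*b'^2 ≤ (k:ℤ))
    (s : Multiset (ℤ × ℤ)) (hcard : Multiset.card s = 2*k) (hmem : ∀ p ∈ s, p ∈ A)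
    (hYlow : (s.map Prod.snd).sum ≤ b'^2) :
    ((s.map Prod.fst).sum - (k:ℤ)*a', (s.map Prod.snd).sum - (k:ℤ)*b')
      ∈ iterSum k A - iterSum k A := by
  apply swap_transfer k
  have hfst : ((s.map (swapE : (ℤ×ℤ) ≃+ (ℤ×ℤ))).map Prod.fst).sum = (s.map Prod.snd).sum := by
    rw [Multiset.map_map]; rfl
  have hsnd : ((s.map (swapE : (ℤ×ℤ) ≃+ (ℤ×ℤ))).map Prod.snd).sum = (s.map Prod.fst).sum := by
    rw [Multiset.map_map]; rfl
  have h := botx (ctx_swap C) k hk2 hk1 (s.map (swapE : (ℤ×ℤ) ≃+ (ℤ×ℤ)))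
    (by rw [Multiset.card_map]; exact hcard)
    (by intro p hp
        obtain ⟨q, hq, rfl⟩ := Multiset.mem_map.mp hp
        exact Finset.mem_image_of_mem _ (hmem q hq))
    (by rw [hfst]; exact hYlow)
  rw [hfst, hsnd] at h
  exact h
lemma midcase {A : Finset (ℤ × ℤ)} {a a' b b' : ℤ} (C : Ctx A a a' b b') (k : ℕ)
    (ha'k : a' ≤ (k:ℤ)) (hb'k : b' ≤ (k:ℤ)) (σ τ : ℤ)
    (hσ₁ : -(((k:ℤ) - a)*a') ≤ σ) (hσ₂ : σ ≤ ((k:ℤ) - a)*a')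
    (hτ₁ : -(((k:ℤ) - b)*b') ≤ τ) (hτ₂ : τ ≤ ((k:ℤ) - b)*b') :
    ((σ, τ) : ℤ × ℤ) ∈ iterSum k A - iterSum k A := by
  have hkk : ((k:ℕ):ℤ) = (k:ℤ) := rfl
  obtain ⟨w₁, w₂, r₁, r₂, hw, hr, heqx⟩ :=
    rep_diff a a' C.ha C.hA' C.hca k k ha'k ha'k σ hσ₁ hσ₂
  obtain ⟨u₁, u₂, t₁, t₂, hu, ht, heqy⟩ :=
    rep_diff b b' C.hb C.hB' C.hcb k k hb'k hb'k τ hτ₁ hτ₂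
  have hvI := C.gridMem k w₁ w₂ u₁ u₂ hw hu
  have hwI := C.gridMem k r₁ r₂ t₁ t₂ hr ht
  refine Finset.mem_sub.mpr ⟨_, hvI, _, hwI, ?_⟩
  rw [Prod.ext_iff]
  constructor
  · simp only [Prod.fst_sub]; linarith [heqx]
  · simp only [Prod.snd_sub]; linarith [heqy]

lemma core {A : Finset (ℤ × ℤ)} {a a' b b' : ℤ} (C : Ctx A a a' b b') (k : ℕ)
    (hk1 : 2*a'^2 ≤ (k:ℤ)) (hk2 : 2*b'^2 ≤ (k:ℤ))
    (s : Multiset (ℤ × ℤ)) (hcard : Multiset.card s = 2*k) (hmem : ∀ p ∈ s, p ∈ A) :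
    ((s.map Prod.fst).sum - (k:ℤ)*a', (s.map Prod.snd).sum - (k:ℤ)*b')
      ∈ iterSum k A - iterSum k A := by
  have hA' := C.hA'
  have hB' := C.hB'
  have haa' := C.haa'
  have hbb' := C.hbb'
  have haa2 : a*a' ≤ a'^2 := by nlinarith
  have hbb2 : b*b' ≤ b'^2 := by nlinarith
  have hasq : a' ≤ a'^2 := by nlinarith
  have hbsq : b' ≤ b'^2 := by nlinarith
  set x := (s.map Prod.fst).sum with hx_def
  set y := (s.map Prod.snd).sum with hy_def
  by_cases h1 : 2*(k:ℤ)*a' - x ≤ a'^2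
  · exact topx C k hk1 hk2 s hcard hmem h1
  by_cases h2 : x ≤ a'^2
  · exact botx C k hk1 hk2 s hcard hmem h2
  by_cases h3 : 2*(k:ℤ)*b' - y ≤ b'^2
  · exact topy C k hk1 hk2 s hcard hmem h3
  by_cases h4 : y ≤ b'^2
  · exact boty C k hk1 hk2 s hcard hmem h4
  push_neg at h1 h2 h3 h4
  apply midcase C k (by linarith) (by linarith)
  · have hexp : ((k:ℤ) - a)*a' = (k:ℤ)*a' - a*a' := by ring
    linarith
  · have hexp : ((k:ℤ) - a)*a' = (k:ℤ)*a' - a*a' := by ring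
    linarith
  · have hexp : ((k:ℤ) - b)*b' = (k:ℤ)*b' - b*b' := by ring
    linarith
  · have hexp : ((k:ℤ) - b)*b' = (k:ℤ)*b' - b*b' := by ring
    linarith
theorem stmt11 (A : Finset (ℤ × ℤ)) (a a' b b' : ℤ)
    (hnn : ∀ p ∈ A, 0 ≤ p.1 ∧ 0 ≤ p.2)
    (ha : 0 < a) (hamin : ∀ p ∈ A, p.1 ≠ 0 → a ≤ p.1)
    (ha' : ∀ p ∈ A, p.1 ≤ a')
    (hb : 0 < b) (hbmin : ∀ p ∈ A, p.2 ≠ 0 → b ≤ p.2)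
    (hb' : ∀ p ∈ A, p.2 ≤ b')
    (hca : Int.gcd a a' = 1) (hcb : Int.gcd b b' = 1)
    (hsub : ({((0:ℤ),(0:ℤ)), (a,0), (0,b), (a',0), (0,b'), (a,b), (a,b'), (a',b),
      (a',b')} : Finset (ℤ × ℤ)) ⊆ A) :
    (∀ k : ℕ, max (2*a'^2) (2*b'^2) ≤ (k : ℤ) →
      (iterSum k A + iterSum k A).card ≤ (iterSum k A - iterSum k A).card) ∧
    ¬ (∀ k : ℕ, 1 ≤ k →
      (iterSum k A - iterSum k A).card < (iterSum k A + iterSum k A).card) := by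
  have C : Ctx A a a' b b' := by
    refine ⟨hnn, ha, hamin, ha', hb, hbmin, hb', hca, hcb,
      hsub ?_, hsub ?_, hsub ?_, hsub ?_, hsub ?_, hsub ?_, hsub ?_, hsub ?_, hsub ?_⟩ <;> simp
  have hA' := C.hA'
  have hB' := C.hB'
  have main : ∀ k : ℕ, max (2*a'^2) (2*b'^2) ≤ (k : ℤ) →
      (iterSum k A + iterSum k A).card ≤ (iterSum k A - iterSum k A).card := by
    intro k hk
    have hk1 : 2*a'^2 ≤ (k:ℤ) := le_trans (le_max_left _ _) hk
    have hk2 : 2*b'^2 ≤ (k:ℤ) := le_trans (le_max_right _ _) hk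
    have key : ∀ u ∈ iterSum k A + iterSum k A,
        u - (((k:ℤ)*a', (k:ℤ)*b') : ℤ × ℤ) ∈ iterSum k A - iterSum k A := by
      intro u hu
      obtain ⟨v, hv, w, hw, rfl⟩ := Finset.mem_add.mp hu
      obtain ⟨s₁, hc₁, hm₁, hs₁⟩ := (mem_iterSum_iff k A v).mp hv
      obtain ⟨s₂, hc₂, hm₂, hs₂⟩ := (mem_iterSum_iff k A w).mp hw
      have hc : Multiset.card (s₁ + s₂) = 2*k := by
        rw [Multiset.card_add, hc₁, hc₂]; omega
      have hm : ∀ p ∈ s₁ + s₂, p ∈ A := by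
        intro p hp
        rcases Multiset.mem_add.mp hp with h | h
        · exact hm₁ p h
        · exact hm₂ p h
      have h := core C k hk1 hk2 (s₁ + s₂) hc hm
      have hxe : ((s₁ + s₂).map Prod.fst).sum = (v + w).1 := by
        rw [← fst_sum, Multiset.sum_add, hs₁, hs₂]
      have hye : ((s₁ + s₂).map Prod.snd).sum = (v + w).2 := by
        rw [← snd_sum, Multiset.sum_add, hs₁, hs₂]
      rw [hxe, hye] at h
      have : (v + w) - (((k:ℤ)*a', (k:ℤ)*b') : ℤ × ℤ)
          = (((v+w).1 - (k:ℤ)*a', (v+w).2 - (k:ℤ)*b') : ℤ × ℤ) := rfl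
      rw [this]
      exact h
    have hinj : Function.Injective (fun u : ℤ × ℤ => u - ((k:ℤ)*a', (k:ℤ)*b')) := by
      intro u₁ u₂ h
      simpa using congrArg (fun z => z + (((k:ℤ)*a', (k:ℤ)*b') : ℤ × ℤ)) h
    calc (iterSum k A + iterSum k A).card
        = ((iterSum k A + iterSum k A).image
            (fun u => u - (((k:ℤ)*a', (k:ℤ)*b') : ℤ × ℤ))).card :=
          (Finset.card_image_of_injective _ hinj).symm
      _ ≤ (iterSum k A - iterSum k A).card := by
          apply Finset.card_le_card
          rw [Finset.image_subset_iff]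
          exact key
  refine ⟨main, ?_⟩
  intro hcon
  set N : ℤ := max (2*a'^2) (2*b'^2) with hN_def
  have hN2 : (2:ℤ) ≤ N := by
    have h1 : (1:ℤ) ≤ a'^2 := by nlinarith
    have : 2*a'^2 ≤ N := le_max_left _ _
    linarith
  have hNn : ((N.toNat : ℕ) : ℤ) = N := Int.toNat_of_nonneg (by linarith)
  have h1 := main N.toNat (by rw [hNn])
  have h2 := hcon N.toNat (by omega)
  omega
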